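/- Let A be a finite nonempty set, Q_r, Q_c : A → ℝ, and β ∈ ℝ such that some probability distribution ρ on A satisfies E_{a∼ρ}[Q_c(a)] ≤ β. Then the nested program — over probability distributions ρ on A with E_{a∼ρ}[Q_c(a)] ≤ β, first maximize E_{a∼ρ}[Q_r(a)], then among the maximizers minimize E_{a∼ρ}[Q_c(a)] — admits a solution that is a mixture of at most two Dirac distributions, i.e. of the form (1−λ)δ_{a¹} + λδ_{a²} with a¹, a² ∈ A and λ ∈ [0,1]. -/

import Mathlib

/-- A probability distribution on a finite type. -/
def IsPMFf {A : Type} [Fintype A] (ρ : A → ℝ) : Prop :=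
  (∀ a, 0 ≤ ρ a) ∧ ∑ a, ρ a = 1

/-- Expectation `E_{a∼ρ}[f(a)] = Σ_a ρ(a) f(a)`. -/
noncomputable def Eexp {A : Type} [Fintype A] (ρ : A → ℝ) (f : A → ℝ) : ℝ :=
  ∑ a, ρ a * f a

/-- `ρ` solves the nested program: among probability distributions `ρ'` on `A` with
`E_{a∼ρ'}[Q_c(a)] ≤ β`, it maximizes `E_{a∼ρ'}[Q_r(a)]`, and among those maximizers
it minimizes `E_{a∼ρ'}[Q_c(a)]`. -/
def SolvesNested {A : Type} [Fintype A] (Qc Qr : A → ℝ) (β : ℝ) (ρ : A → ℝ) : Prop :=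
  IsPMFf ρ ∧ Eexp ρ Qc ≤ β ∧
  (∀ ρ', IsPMFf ρ' → Eexp ρ' Qc ≤ β → Eexp ρ' Qr ≤ Eexp ρ Qr) ∧
  (∀ ρ', IsPMFf ρ' → Eexp ρ' Qc ≤ β → Eexp ρ' Qr = Eexp ρ Qr → Eexp ρ Qc ≤ Eexp ρ' Qc)

lemma exists_pqr (ca cb cc ra rb rc : ℝ) :
    ∃ p q r : ℝ, p + q + r = 0 ∧ p*ca + q*cb + r*cc = 0 ∧ 0 ≤ p*ra + q*rb + r*rc ∧
      (p < 0 ∨ q < 0 ∨ r < 0) := by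
  have key : ∃ p q r : ℝ, p + q + r = 0 ∧ p*ca + q*cb + r*cc = 0 ∧
      ¬(p = 0 ∧ q = 0 ∧ r = 0) := by
    by_cases h1 : ca = cb
    · exact ⟨1, -1, 0, by ring, by rw [h1]; ring, by norm_num⟩
    · refine ⟨cb - cc, cc - ca, ca - cb, by ring, by ring, ?_⟩
      rintro ⟨-, -, hr⟩
      exact h1 (by linarith)
  obtain ⟨p, q, r, hsum, hc, hnz⟩ := key
  have hneg : ∀ p' q' r' : ℝ, p' + q' + r' = 0 → ¬(p' = 0 ∧ q' = 0 ∧ r' = 0) →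
      (p' < 0 ∨ q' < 0 ∨ r' < 0) := by
    intro p' q' r' hs hn
    by_contra h
    push_neg at h
    obtain ⟨h1, h2, h3⟩ := h
    exact hn ⟨by linarith, by linarith, by linarith⟩
  rcases le_or_gt 0 (p*ra + q*rb + r*rc) with hs | hs
  · exact ⟨p, q, r, hsum, hc, hs, hneg p q r hsum hnz⟩
  · refine ⟨-p, -q, -r, by linarith, by linarith, by linarith, ?_⟩
    refine hneg _ _ _ (by linarith) ?_
    rintro ⟨h1, h2, h3⟩
    exact hnz ⟨by linarith, by linarith, by linarith⟩

lemma tri_sum {A : Type} [Fintype A] [DecidableEq A] {a b c : A}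
    (hab : a ≠ b) (hac : a ≠ c) (hbc : b ≠ c) (p q r : ℝ) (f : A → ℝ) :
    ∑ x, (p * (if x = a then 1 else 0) + q * (if x = b then 1 else 0)
        + r * (if x = c then 1 else 0)) * f x = p * f a + q * f b + r * f c := by
  have h : ∀ x : A, (p * (if x = a then 1 else 0) + q * (if x = b then 1 else 0)
        + r * (if x = c then 1 else 0)) * f x
      = (if x = a then p * f a else 0) + (if x = b then q * f b else 0)
        + (if x = c then r * f c else 0) := by
    intro x
    by_cases h1 : x = a <;> by_cases h2 : x = b <;> by_cases h3 : x = c <;>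
      simp_all
  rw [Finset.sum_congr rfl (fun x _ => h x)]
  simp [Finset.sum_add_distrib, Finset.sum_ite_eq']

lemma reduce {A : Type} [Fintype A] [DecidableEq A] (Qr Qc : A → ℝ) :
    ∀ n : ℕ, ∀ ρ : A → ℝ, IsPMFf ρ →
      (Finset.univ.filter (fun x => ρ x ≠ 0)).card ≤ n →
      ∃ a1 a2 : A, ∃ l : ℝ, l ∈ Set.Icc (0:ℝ) 1 ∧
        Eexp (fun a => (1 - l) * (if a = a1 then 1 else 0)
            + l * (if a = a2 then 1 else 0)) Qc = Eexp ρ Qc ∧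
        Eexp ρ Qr ≤ Eexp (fun a => (1 - l) * (if a = a1 then 1 else 0)
            + l * (if a = a2 then 1 else 0)) Qr := by
  intro n
  induction n with
  | zero =>
    intro ρ ⟨hpos, hsum⟩ hcard
    exfalso
    have hempty : Finset.univ.filter (fun x => ρ x ≠ 0) = ∅ :=
      Finset.card_eq_zero.mp (Nat.le_zero.mp hcard)
    have hzero : ∑ a, ρ a = 0 := by
      apply Finset.sum_eq_zero
      intro x hx
      by_contra hne
      have : x ∈ Finset.univ.filter (fun x => ρ x ≠ 0) := Finset.mem_filter.mpr ⟨hx, hne⟩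
      rw [hempty] at this
      exact absurd this (Finset.notMem_empty x)
    linarith [hsum, hzero]
  | succ n ih =>
    intro ρ hpmf hcard
    obtain ⟨hpos, hsum⟩ := hpmf
    set supp := Finset.univ.filter (fun x => ρ x ≠ 0) with hsuppdef
    have hnotmem : ∀ x : A, ρ x = 0 → x ∉ supp := by
      intro x hx hmem
      exact (Finset.mem_filter.mp hmem).2 hx
    have hmem : ∀ x : A, ρ x ≠ 0 → x ∈ supp := fun x hx =>
      Finset.mem_filter.mpr ⟨Finset.mem_univ x, hx⟩
    have hsupp_sum : ∑ x ∈ supp, ρ x = ∑ x, ρ x := by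
      apply Finset.sum_subset (Finset.filter_subset _ _)
      intro x _ hx
      by_contra hne
      exact hx (hmem x hne)
    have hsuppne : supp.Nonempty := by
      obtain ⟨x, -, hx⟩ := Finset.exists_ne_zero_of_sum_ne_zero
        (by rw [hsum]; norm_num : ∑ a, ρ a ≠ 0)
      exact ⟨x, hmem x hx⟩
    by_cases hsmall : supp.card ≤ 2
    -- BASE CASE: support has at most two elements; ρ is already a two-point mixture.
    · obtain ⟨a, ha⟩ := hsuppne
      have hρa : ρ a ≠ 0 := (Finset.mem_filter.mp ha).2
      by_cases hb : (supp.erase a).Nonempty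
      · -- two-point support {a, b}
        obtain ⟨b, hbmem⟩ := hb
        have hba : b ≠ a := Finset.ne_of_mem_erase hbmem
        have hbsupp : b ∈ supp := Finset.mem_of_mem_erase hbmem
        have hsub : supp ⊆ {a, b} := by
          have hcard2 : ({a, b} : Finset A).card = 2 := by
            rw [Finset.card_insert_of_notMem (by simpa using hba.symm)]
            simp
          have hsub' : ({a, b} : Finset A) ⊆ supp := by
            intro x hx
            rcases Finset.mem_insert.mp hx with h | h
            · rwa [h]
            · rw [Finset.mem_singleton.mp h]; exact hbsupp
          exact (Finset.eq_of_subset_of_card_le hsub' (by omega)).ge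
        have hzero : ∀ x : A, x ≠ a → x ≠ b → ρ x = 0 := by
          intro x hxa hxb
          by_contra hne
          rcases Finset.mem_insert.mp (hsub (hmem x hne)) with h | h
          · exact hxa h
          · exact hxb (Finset.mem_singleton.mp h)
        have hab1 : ρ a + ρ b = 1 := by
          have h3 : ∑ x ∈ ({a, b} : Finset A), ρ x = ∑ x ∈ supp, ρ x := by
            apply (Finset.sum_subset hsub ?_).symm
            intro x _ hx
            by_contra hne
            exact hx (hmem x hne)
          rw [Finset.sum_pair (fun h => hba h.symm)] at h3
          rw [h3, hsupp_sum, hsum]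
        have hfeq : ρ = fun x => (1 - ρ b) * (if x = a then 1 else 0)
            + ρ b * (if x = b then 1 else 0) := by
          funext x
          by_cases hxa : x = a
          · subst hxa
            simp [show ¬ (x = b) from fun h => hba h.symm]
            linarith
          · by_cases hxb : x = b
            · subst hxb
              simp [hxa]
            · simp [hxa, hxb, hzero x hxa hxb]
        refine ⟨a, b, ρ b, ⟨hpos b, by linarith [hpos a]⟩, ?_, ?_⟩
        · rw [← hfeq]
        · rw [← hfeq]
      · -- singleton support {a}
        have hzero : ∀ x : A, x ≠ a → ρ x = 0 := by
          intro x hxa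
          by_contra hne
          exact hb ⟨x, Finset.mem_erase.mpr ⟨hxa, hmem x hne⟩⟩
        have hρa1 : ρ a = 1 := by
          have h1 : ∑ x, ρ x = ρ a :=
            Finset.sum_eq_single_of_mem a (Finset.mem_univ a) (fun x _ hx => hzero x hx)
          rw [← h1, hsum]
        have hfeq : ρ = fun x => (1 - (0:ℝ)) * (if x = a then 1 else 0)
            + 0 * (if x = a then 1 else 0) := by
          funext x
          by_cases hxa : x = a
          · subst hxa; simp [hρa1]
          · simp [hxa, hzero x hxa]
        refine ⟨a, a, 0, ⟨le_refl 0, by norm_num⟩, ?_, ?_⟩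
        · rw [← hfeq]
        · rw [← hfeq]
    -- INDUCTIVE STEP: support has at least three elements; reduce support size.
    · push_neg at hsmall
      have h3 : 3 ≤ supp.card := hsmall
      obtain ⟨a, ha⟩ := hsuppne
      have hbne : (supp.erase a).Nonempty := by
        rw [← Finset.card_pos, Finset.card_erase_of_mem ha]; omega
      obtain ⟨b, hbmem⟩ := hbne
      have hcne : ((supp.erase a).erase b).Nonempty := by
        rw [← Finset.card_pos, Finset.card_erase_of_mem hbmem,
          Finset.card_erase_of_mem ha]
        omega
      obtain ⟨c, hcmem⟩ := hcne
      have hba : b ≠ a := Finset.ne_of_mem_erase hbmem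
      have hcb : c ≠ b := Finset.ne_of_mem_erase hcmem
      have hca : c ≠ a := Finset.ne_of_mem_erase (Finset.mem_of_mem_erase hcmem)
      have hbsupp : b ∈ supp := Finset.mem_of_mem_erase hbmem
      have hcsupp : c ∈ supp := Finset.mem_of_mem_erase (Finset.mem_of_mem_erase hcmem)
      obtain ⟨p, q, r, hpqr, hQc0, hQr0, hnegpqr⟩ :=
        exists_pqr (Qc a) (Qc b) (Qc c) (Qr a) (Qr b) (Qr c)
      set d : A → ℝ := fun x => p * (if x = a then 1 else 0) + q * (if x = b then 1 else 0)
          + r * (if x = c then 1 else 0) with hddef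
      have hab : a ≠ b := fun h => hba h.symm
      have hac : a ≠ c := fun h => hca h.symm
      have hbc : b ≠ c := fun h => hcb h.symm
      have hda : d a = p := by simp [hddef, hab, hac]
      have hdb : d b = q := by simp [hddef, hba, hbc]
      have hdc : d c = r := by simp [hddef, hca, hcb]
      have hdother : ∀ x : A, x ≠ a → x ≠ b → x ≠ c → d x = 0 := by
        intro x h1 h2 h3
        simp [hddef, h1, h2, h3]
      have hdsumf : ∀ f : A → ℝ, ∑ x, d x * f x = p * f a + q * f b + r * f c := by
        intro f
        rw [hddef]
        exact tri_sum hab hac hbc p q r f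
      have hdsum : ∑ x, d x = 0 := by
        have := hdsumf (fun _ => 1)
        simpa [hpqr] using this
      have hdQc : ∑ x, d x * Qc x = 0 := by rw [hdsumf]; exact hQc0
      have hdQr : 0 ≤ ∑ x, d x * Qr x := by rw [hdsumf]; exact hQr0
      -- the set of coordinates that decrease
      set T : Finset A := Finset.univ.filter (fun x => d x < 0) with hTdef
      have hTne : T.Nonempty := by
        rcases hnegpqr with h | h | h
        · exact ⟨a, Finset.mem_filter.mpr ⟨Finset.mem_univ a, by rwa [hda]⟩⟩
        · exact ⟨b, Finset.mem_filter.mpr ⟨Finset.mem_univ b, by rwa [hdb]⟩⟩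
        · exact ⟨c, Finset.mem_filter.mpr ⟨Finset.mem_univ c, by rwa [hdc]⟩⟩
      obtain ⟨x0, hx0T, hx0min⟩ := T.exists_min_image (fun x => ρ x / (-d x)) hTne
      have hdx0 : d x0 < 0 := (Finset.mem_filter.mp hx0T).2
      set t : ℝ := ρ x0 / (-d x0) with htdef
      have ht0 : 0 ≤ t := div_nonneg (hpos x0) (by linarith)
      set ρ' : A → ℝ := fun x => ρ x + t * d x with hρ'def
      have hρ'pos : ∀ x, 0 ≤ ρ' x := by
        intro x
        show 0 ≤ ρ x + t * d x
        by_cases hdx : d x < 0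
        · have hmin := hx0min x (Finset.mem_filter.mpr ⟨Finset.mem_univ x, hdx⟩)
          rw [le_div_iff₀ (by linarith : (0:ℝ) < -d x)] at hmin
          have h2 : t * -d x = -(t * d x) := by ring
          linarith
        · push_neg at hdx
          have h1 := mul_nonneg ht0 hdx
          have h2 := hpos x
          linarith
      have hρ'x0 : ρ' x0 = 0 := by
        show ρ x0 + t * d x0 = 0
        rw [htdef]
        have hne : -d x0 ≠ 0 := ne_of_gt (by linarith)
        rw [div_mul_eq_mul_div, div_neg, mul_div_assoc, div_self (ne_of_lt hdx0)]; ring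
      have hρ'zero : ∀ x : A, ρ x = 0 → ρ' x = 0 := by
        intro x hx
        have hxa : x ≠ a := fun h => (Finset.mem_filter.mp ha).2 (h ▸ hx)
        have hxb : x ≠ b := fun h => (Finset.mem_filter.mp hbsupp).2 (h ▸ hx)
        have hxc : x ≠ c := fun h => (Finset.mem_filter.mp hcsupp).2 (h ▸ hx)
        show ρ x + t * d x = 0
        simp [hx, hdother x hxa hxb hxc]
      have hx0supp : x0 ∈ supp := by
        by_contra h
        have hρx0 : ρ x0 = 0 := by
          by_contra hne
          exact h (hmem x0 hne)
        have : d x0 = 0 := by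
          by_contra hne
          have hxa : x0 = a ∨ x0 = b ∨ x0 = c := by
            by_contra hcon
            push_neg at hcon
            exact hne (hdother x0 hcon.1 hcon.2.1 hcon.2.2)
          rcases hxa with h' | h' | h'
          · exact (Finset.mem_filter.mp ha).2 (h' ▸ hρx0)
          · exact (Finset.mem_filter.mp hbsupp).2 (h' ▸ hρx0)
          · exact (Finset.mem_filter.mp hcsupp).2 (h' ▸ hρx0)
        linarith [hdx0]
      have hsum' : ∑ x, ρ' x = 1 := by
        show ∑ x, (ρ x + t * d x) = 1
        rw [Finset.sum_add_distrib, ← Finset.mul_sum, hdsum, hsum]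
        ring
      have hcard' : (Finset.univ.filter (fun x => ρ' x ≠ 0)).card ≤ n := by
        have hsub : Finset.univ.filter (fun x => ρ' x ≠ 0) ⊆ supp.erase x0 := by
          intro x hx
          have hx' : ρ' x ≠ 0 := (Finset.mem_filter.mp hx).2
          have hxx0 : x ≠ x0 := by
            rintro rfl
            exact hx' hρ'x0
          have hρx : ρ x ≠ 0 := by
            intro h
            exact hx' (hρ'zero x h)
          exact Finset.mem_erase.mpr ⟨hxx0, hmem x hρx⟩
        have h1 := Finset.card_le_card hsub
        rw [Finset.card_erase_of_mem hx0supp] at h1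
        omega
      have hQceq : Eexp ρ' Qc = Eexp ρ Qc := by
        show ∑ x, (ρ x + t * d x) * Qc x = ∑ x, ρ x * Qc x
        have : ∀ x : A, (ρ x + t * d x) * Qc x = ρ x * Qc x + t * (d x * Qc x) := by
          intro x; ring
        rw [Finset.sum_congr rfl (fun x _ => this x), Finset.sum_add_distrib,
          ← Finset.mul_sum, hdQc]
        ring
      have hQrle : Eexp ρ Qr ≤ Eexp ρ' Qr := by
        show ∑ x, ρ x * Qr x ≤ ∑ x, (ρ x + t * d x) * Qr x
        have heq : ∀ x : A, (ρ x + t * d x) * Qr x = ρ x * Qr x + t * (d x * Qr x) := by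
          intro x; ring
        rw [Finset.sum_congr rfl (fun x _ => heq x), Finset.sum_add_distrib,
          ← Finset.mul_sum]
        have := mul_nonneg ht0 hdQr
        linarith
      obtain ⟨a1, a2, l, hl, hEc, hEr⟩ := ih ρ' ⟨hρ'pos, hsum'⟩ hcard'
      exact ⟨a1, a2, l, hl, by rw [hEc, hQceq], le_trans hQrle hEr⟩

lemma exists_nested {A : Type} [Fintype A] [DecidableEq A] (Qr Qc : A → ℝ) (β : ℝ)
    (hfeas : ∃ ρ : A → ℝ, IsPMFf ρ ∧ Eexp ρ Qc ≤ β) :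
    ∃ ρ : A → ℝ, SolvesNested Qc Qr β ρ := by
  have hcont : ∀ f : A → ℝ, Continuous fun ρ : A → ℝ => Eexp ρ f := fun f =>
    continuous_finset_sum _ fun a _ => (continuous_apply a).mul continuous_const
  have hsumcont : Continuous fun ρ : A → ℝ => ∑ a, ρ a :=
    continuous_finset_sum _ fun a _ => continuous_apply a
  set K : Set (A → ℝ) := {ρ | IsPMFf ρ ∧ Eexp ρ Qc ≤ β} with hKdef
  have hKclosed : IsClosed K := by
    have h1 : {ρ : A → ℝ | ∀ a, 0 ≤ ρ a} = ⋂ a, {ρ : A → ℝ | 0 ≤ ρ a} := by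
      ext ρ; simp
    have hKeq : K = ({ρ : A → ℝ | ∀ a, 0 ≤ ρ a} ∩ {ρ | ∑ a, ρ a = 1})
        ∩ {ρ | Eexp ρ Qc ≤ β} := by
      ext ρ; simp [hKdef, IsPMFf, and_assoc]
    rw [hKeq]
    refine IsClosed.inter (IsClosed.inter ?_ ?_) ?_
    · rw [h1]
      exact isClosed_iInter fun a => isClosed_le continuous_const (continuous_apply a)
    · exact isClosed_eq hsumcont continuous_const
    · exact isClosed_le (hcont Qc) continuous_const
  have hKsub : K ⊆ Set.Icc (0 : A → ℝ) 1 := by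
    rintro ρ ⟨⟨hpos, hsum⟩, -⟩
    constructor
    · intro a; exact hpos a
    · intro a
      calc ρ a ≤ ∑ x, ρ x := Finset.single_le_sum (fun i _ => hpos i) (Finset.mem_univ a)
      _ = 1 := hsum
  have hKcompact : IsCompact K := isCompact_Icc.of_isClosed_subset hKclosed hKsub
  have hKne : K.Nonempty := hfeas
  obtain ⟨ρ1, hρ1K, hmax⟩ := hKcompact.exists_isMaxOn hKne (hcont Qr).continuousOn
  set K2 : Set (A → ℝ) := K ∩ {ρ | Eexp ρ Qr = Eexp ρ1 Qr} with hK2def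
  have hK2closed : IsClosed K2 :=
    hKclosed.inter (isClosed_eq (hcont Qr) continuous_const)
  have hK2compact : IsCompact K2 :=
    hKcompact.of_isClosed_subset hK2closed Set.inter_subset_left
  have hK2ne : K2.Nonempty := ⟨ρ1, hρ1K, rfl⟩
  obtain ⟨ρ2, hρ2K2, hmin⟩ := hK2compact.exists_isMinOn hK2ne (hcont Qc).continuousOn
  obtain ⟨hρ2K, hρ2eq⟩ := hρ2K2
  obtain ⟨hρ2pmf, hρ2feas⟩ := hρ2K
  refine ⟨ρ2, hρ2pmf, hρ2feas, ?_, ?_⟩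
  · intro ρ' hpmf hfe
    have : Eexp ρ' Qr ≤ Eexp ρ1 Qr := hmax (show ρ' ∈ K from ⟨hpmf, hfe⟩)
    rw [hρ2eq]; exact this
  · intro ρ' hpmf hfe heq
    exact hmin (show ρ' ∈ K2 from ⟨⟨hpmf, hfe⟩, by simp only [Set.mem_setOf_eq] at hρ2eq ⊢; rw [heq, hρ2eq]⟩)

/-- If the nested program is feasible, it admits a solution that is a mixture of at
most two Dirac distributions: `(1−λ)δ_{a¹} + λδ_{a²}` with `a¹, a² ∈ A`, `λ ∈ [0,1]`. -/
theorem nested_program_two_point_solution {A : Type} [Fintype A] [Nonempty A]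
    [DecidableEq A] (Qr Qc : A → ℝ) (β : ℝ)
    (hfeas : ∃ ρ : A → ℝ, IsPMFf ρ ∧ Eexp ρ Qc ≤ β) :
    ∃ a1 a2 : A, ∃ l : ℝ, l ∈ Set.Icc (0 : ℝ) 1 ∧
      SolvesNested Qc Qr β
        (fun a => (1 - l) * (if a = a1 then 1 else 0) + l * (if a = a2 then 1 else 0)) := by
  obtain ⟨ρs, hρs⟩ := exists_nested Qr Qc β hfeas
  obtain ⟨⟨hpos, hsum⟩, hfeasρ, hmax, hmin⟩ := hρs
  obtain ⟨a1, a2, l, hl, hEc, hEr⟩ := reduce Qr Qc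
      (Finset.univ.filter (fun x => ρs x ≠ 0)).card ρs ⟨hpos, hsum⟩ le_rfl
  refine ⟨a1, a2, l, hl, ?_⟩
  set μ : A → ℝ := fun a => (1 - l) * (if a = a1 then 1 else 0)
      + l * (if a = a2 then 1 else 0) with hμdef
  have hμpmf : IsPMFf μ := by
    constructor
    · intro x
      apply add_nonneg <;> apply mul_nonneg
      · linarith [hl.2]
      · split <;> norm_num
      · exact hl.1
      · split <;> norm_num
    · show ∑ x, ((1 - l) * (if x = a1 then 1 else 0) + l * (if x = a2 then 1 else 0)) = 1
      rw [Finset.sum_add_distrib, ← Finset.mul_sum, ← Finset.mul_sum]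
      simp [Finset.sum_ite_eq']
  have hμfeas : Eexp μ Qc ≤ β := by rw [hEc]; exact hfeasρ
  have hμeq : Eexp μ Qr = Eexp ρs Qr := le_antisymm (hmax μ hμpmf hμfeas) hEr
  refine ⟨hμpmf, hμfeas, ?_, ?_⟩
  · intro ρ' h1 h2
    exact (hmax ρ' h1 h2).trans (le_of_eq hμeq.symm)
  · intro ρ' h1 h2 h3
    rw [hEc]
    exact hmin ρ' h1 h2 (by rw [h3, hμeq])
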